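/- If a connected unweighted graph H admits an (a,b,1)-contraction sequence (that is, H can be turned into a one-vertex graph by a total of at most a contractions of connected subgraphs of radius at most 1, performed in b rounds of pairwise vertex-disjoint contractions), then the hop-diameter of H is at most 2a. -/

import Mathlib

open scoped BigOperators

noncomputable section

namespace Paper

variable {V : Type}

def IsPartition (Ps : Set (Set V)) : Prop :=
  (∀ v : V, ∃ P ∈ Ps, v ∈ P) ∧
  (∀ P ∈ Ps, ∀ Q ∈ Ps, P ≠ Q → Disjoint P Q) ∧
  (∀ P ∈ Ps, P.Nonempty)

def quotGraph (G : SimpleGraph V) (Ps : Set (Set V)) : SimpleGraph {D // D ∈ Ps} where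
  Adj P Q := P ≠ Q ∧ ∃ u ∈ P.1, ∃ v ∈ Q.1, G.Adj u v
  symm := by
    constructor
    rintro P Q ⟨hne, u, hu, x, hx, hadj⟩
    exact ⟨hne.symm, x, hx, u, hu, hadj.symm⟩
  loopless := by
    constructor
    rintro P ⟨hne, -⟩
    exact hne rfl

structure ContractionSeq [Fintype V] (G : SimpleGraph V) (a b c : ℕ) where
  Ps : ℕ → Set (Set V)
  con : ℕ → Set (Set V)
  ispart : ∀ i ≤ b, IsPartition (Ps i)
  bot : Ps 0 = {P | ∃ v : V, P = {v}}
  top : Ps b = {Set.univ}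
  refines : ∀ i < b, ∀ P ∈ Ps i, ∃ Q ∈ Ps (i + 1), P ⊆ Q
  con_sub : ∀ i < b, con (i + 1) ⊆ Ps (i + 1)
  old_parts : ∀ i < b, ∀ P ∈ Ps (i + 1), P ∉ con (i + 1) → P ∈ Ps i
  contracted : ∀ i < b, ∀ P ∈ con (i + 1),
    ∃ D₀ : Set V, ∃ h₀ : D₀ ∈ ({D | D ∈ Ps i ∧ D ⊆ P} : Set (Set V)),
      ∀ D : Set V, ∀ hD : D ∈ ({D | D ∈ Ps i ∧ D ⊆ P} : Set (Set V)),
        ∃ wlk : (quotGraph G {D | D ∈ Ps i ∧ D ⊆ P}).Walk ⟨D₀, h₀⟩ ⟨D, hD⟩,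
          wlk.length ≤ c
  count : ∑ i ∈ Finset.range b, (con (i + 1)).ncard ≤ a

/-- Number of contractions happening inside `P` during the first `i` rounds. -/
def cost (con : ℕ → Set (Set V)) (i : ℕ) (P : Set V) : ℕ :=
  ∑ j ∈ Finset.range i, {C ∈ con (j + 1) | C ⊆ P}.ncard

lemma adj_of_walk_length_le_one {W : Type*} {G : SimpleGraph W} {u v : W} (hne : u ≠ v)
    (p : G.Walk u v) (h : p.length ≤ 1) : G.Adj u v := by
  cases p with
  | nil => exact absurd rfl hne
  | cons h' q =>
    simp only [SimpleGraph.Walk.length_cons] at h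
    have hq : q.length = 0 := by omega
    have := q.eq_of_length_eq_zero hq
    subst this
    exact h'

lemma ncard_add3_le {α : Type*} [Finite α] {s t r w : Set α}
    (hs : s ⊆ w) (ht : t ⊆ w) (hr : r ⊆ w)
    (hst : Disjoint s t) (hsr : Disjoint s r) (htr : Disjoint t r) :
    s.ncard + t.ncard + r.ncard ≤ w.ncard := by
  rw [← Set.ncard_union_eq hst (Set.toFinite s) (Set.toFinite t),
    ← Set.ncard_union_eq (Set.disjoint_union_left.mpr ⟨hsr, htr⟩) (Set.toFinite _) (Set.toFinite r)]
  refine Set.ncard_le_ncard ?_ (Set.toFinite w)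
  rintro x ((hx | hx) | hx)
  exacts [hs hx, ht hx, hr hx]

lemma cost_triple [Fintype V] {con : ℕ → Set (Set V)} {i : ℕ} {D₁ D₂ D₃ P : Set V}
    (hne : ∀ j < i, ∀ C ∈ con (j + 1), C.Nonempty)
    (h1 : D₁ ⊆ P) (h2 : D₂ ⊆ P) (h3 : D₃ ⊆ P)
    (d12 : Disjoint D₁ D₂) (d13 : Disjoint D₁ D₃) (d23 : Disjoint D₂ D₃) :
    cost con i D₁ + cost con i D₂ + cost con i D₃ ≤ cost con i P := by
  unfold cost
  rw [← Finset.sum_add_distrib, ← Finset.sum_add_distrib]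
  apply Finset.sum_le_sum
  intro j hj
  have hj' := Finset.mem_range.mp hj
  have key : ∀ A B : Set V, Disjoint A B →
      Disjoint {C ∈ con (j + 1) | C ⊆ A} {C ∈ con (j + 1) | C ⊆ B} := by
    intro A B hAB
    rw [Set.disjoint_left]
    rintro C ⟨hC1, hC2⟩ ⟨hC1', hC2'⟩
    have : C ⊆ (∅ : Set V) := hAB hC2 hC2'
    obtain ⟨x, hx⟩ := hne j hj' C hC1
    exact (this hx)
  exact ncard_add3_le
    (fun C hC => ⟨hC.1, hC.2.trans h1⟩) (fun C hC => ⟨hC.1, hC.2.trans h2⟩)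
    (fun C hC => ⟨hC.1, hC.2.trans h3⟩)
    (key _ _ d12) (key _ _ d13) (key _ _ d23)

lemma cost_pair [Fintype V] {con : ℕ → Set (Set V)} {i : ℕ} {D₁ D₂ P : Set V}
    (hne : ∀ j < i, ∀ C ∈ con (j + 1), C.Nonempty)
    (h1 : D₁ ⊆ P) (h2 : D₂ ⊆ P) (d12 : Disjoint D₁ D₂) :
    cost con i D₁ + cost con i D₂ ≤ cost con i P := by
  have := cost_triple (D₃ := ∅) hne h1 h2 (Set.empty_subset _) d12
    disjoint_bot_right disjoint_bot_right
  omega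

lemma cost_mono [Fintype V] {con : ℕ → Set (Set V)} {i : ℕ} {D P : Set V}
    (hne : ∀ j < i, ∀ C ∈ con (j + 1), C.Nonempty) (h1 : D ⊆ P) :
    cost con i D ≤ cost con i P := by
  have := cost_pair (D₂ := ∅) hne h1 (Set.empty_subset _) disjoint_bot_right
  omega

lemma walk_in_part {V : Type} [Fintype V] {H : SimpleGraph V} {a b : ℕ}
    (cs : ContractionSeq H a b 1) :
    ∀ i ≤ b, ∀ P ∈ cs.Ps i, ∀ u ∈ P, ∀ v ∈ P,
      ∃ p : H.Walk u v, p.length ≤ 2 * cost cs.con i P := by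
  intro i
  induction i with
  | zero =>
    intro _ P hP u hu v hv
    rw [cs.bot] at hP
    obtain ⟨w, rfl⟩ := hP
    rw [Set.mem_singleton_iff] at hu hv
    subst hu; subst hv
    exact ⟨SimpleGraph.Walk.nil, by simp⟩
  | succ i ih =>
    intro hib P hP u hu v hv
    have hib' : i < b := by omega
    have hi : i ≤ b := le_of_lt hib'
    have hCne : ∀ j < i, ∀ C ∈ cs.con (j + 1), C.Nonempty := fun j hj C hC =>
      (cs.ispart (j + 1) (by omega)).2.2 C (cs.con_sub j (by omega) hC)
    have hcost_succ : cost cs.con (i + 1) P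
        = cost cs.con i P + {C ∈ cs.con (i + 1) | C ⊆ P}.ncard :=
      Finset.sum_range_succ _ _
    by_cases hPc : P ∈ cs.con (i + 1)
    · obtain ⟨D₀, h₀, hquot⟩ := cs.contracted i hib' P hPc
      have hD₀ : D₀ ∈ cs.Ps i := h₀.1
      have hD₀P : D₀ ⊆ P := h₀.2
      have findD : ∀ w ∈ P, ∃ D, D ∈ cs.Ps i ∧ D ⊆ P ∧ w ∈ D := by
        intro w hw
        obtain ⟨D, hD, hwD⟩ := (cs.ispart i hi).1 w
        obtain ⟨Q, hQ, hDQ⟩ := cs.refines i hib' D hD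
        have hQP : Q = P := by
          by_contra hne
          exact Set.disjoint_left.mp ((cs.ispart (i + 1) hib).2.1 Q hQ P hP hne) (hDQ hwD) hw
        exact ⟨D, hD, hQP ▸ hDQ, hwD⟩
      obtain ⟨Du, hDu, hDuP, huDu⟩ := findD u hu
      obtain ⟨Dv, hDv, hDvP, hvDv⟩ := findD v hv
      have adjD : ∀ D, D ∈ cs.Ps i → D ⊆ P → D ≠ D₀ → ∃ x ∈ D₀, ∃ y ∈ D, H.Adj x y := by
        intro D hD hDP hne
        obtain ⟨w, hw⟩ := hquot D ⟨hD, hDP⟩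
        have hAdj := adj_of_walk_length_le_one
          (by simp only [ne_eq, Subtype.mk.injEq]; exact fun h => hne h.symm) w hw
        obtain ⟨_, x, hx, y, hy, hxy⟩ := hAdj
        exact ⟨x, hx, y, hy, hxy⟩
      have hone : 1 ≤ {C ∈ cs.con (i + 1) | C ⊆ P}.ncard := by
        have : P ∈ {C ∈ cs.con (i + 1) | C ⊆ P} := ⟨hPc, subset_rfl⟩
        exact (Set.ncard_pos (Set.toFinite _)).mpr ⟨P, this⟩
      have hdisj : ∀ D D', D ∈ cs.Ps i → D' ∈ cs.Ps i → D ≠ D' → Disjoint D D' :=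
        fun D D' hD hD' hne => (cs.ispart i hi).2.1 D hD D' hD' hne
      by_cases hu0 : Du = D₀
      · subst hu0
        by_cases hv0 : Dv = Du
        · subst hv0
          obtain ⟨p, hp⟩ := ih hi Dv hDv u huDu v hvDv
          exact ⟨p, by
            have := cost_mono (con := cs.con) (i := i) hCne hDvP
            omega⟩
        · obtain ⟨x, hx, y, hy, hxy⟩ := adjD Dv hDv hDvP hv0
          obtain ⟨p1, hp1⟩ := ih hi Du hDu u huDu x hx
          obtain ⟨p2, hp2⟩ := ih hi Dv hDv y hy v hvDv
          refine ⟨p1.append (SimpleGraph.Walk.cons hxy p2), ?_⟩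
          have := cost_pair hCne hDuP hDvP (hdisj Du Dv hDu hDv (Ne.symm hv0))
          simp only [SimpleGraph.Walk.length_append, SimpleGraph.Walk.length_cons]
          omega
      · by_cases hv0 : Dv = D₀
        · subst hv0
          obtain ⟨x, hx, y, hy, hxy⟩ := adjD Du hDu hDuP hu0
          obtain ⟨p1, hp1⟩ := ih hi Du hDu u huDu y hy
          obtain ⟨p2, hp2⟩ := ih hi Dv hDv x hx v hvDv
          refine ⟨p1.append (SimpleGraph.Walk.cons hxy.symm p2), ?_⟩
          have := cost_pair hCne hDuP hDvP (hdisj Du Dv hDu hDv hu0)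
          simp only [SimpleGraph.Walk.length_append, SimpleGraph.Walk.length_cons]
          omega
        · by_cases huv : Du = Dv
          · subst huv
            obtain ⟨p, hp⟩ := ih hi Du hDu u huDu v hvDv
            exact ⟨p, by
              have := cost_mono (con := cs.con) (i := i) hCne hDuP
              omega⟩
          · obtain ⟨xu, hxu, yu, hyu, hadju⟩ := adjD Du hDu hDuP hu0
            obtain ⟨xv, hxv, yv, hyv, hadjv⟩ := adjD Dv hDv hDvP hv0
            obtain ⟨p1, hp1⟩ := ih hi Du hDu u huDu yu hyu
            obtain ⟨p2, hp2⟩ := ih hi D₀ hD₀ xu hxu xv hxv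
            obtain ⟨p3, hp3⟩ := ih hi Dv hDv yv hyv v hvDv
            refine ⟨p1.append ((SimpleGraph.Walk.cons hadju.symm
              (p2.append (SimpleGraph.Walk.cons hadjv p3)))), ?_⟩
            have := cost_triple hCne hDuP hD₀P hDvP
              (hdisj Du D₀ hDu hD₀ hu0) (hdisj Du Dv hDu hDv huv)
              (hdisj D₀ Dv hD₀ hDv (fun h => hv0 h.symm))
            simp only [SimpleGraph.Walk.length_append, SimpleGraph.Walk.length_cons]
            omega
    · have hP' : P ∈ cs.Ps i := cs.old_parts i hib' P hP hPc
      obtain ⟨p, hp⟩ := ih hi P hP' u hu v hv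
      exact ⟨p, by omega⟩

theorem statement_8 {V : Type} [Fintype V] (H : SimpleGraph V) (hH : H.Connected)
    (a b : ℕ) (cs : ContractionSeq H a b 1) :
    ∀ u v : V, ∃ p : H.Walk u v, p.length ≤ 2 * a := by
  intro u v
  have hP : (Set.univ : Set V) ∈ cs.Ps b := by rw [cs.top]; exact rfl
  obtain ⟨p, hp⟩ := walk_in_part cs b le_rfl Set.univ hP u trivial v trivial
  refine ⟨p, hp.trans ?_⟩
  have hcost : cost cs.con b Set.univ = ∑ i ∈ Finset.range b, (cs.con (i + 1)).ncard := by
    unfold cost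
    apply Finset.sum_congr rfl
    intro j _
    congr 1
    ext C
    simp [Set.subset_univ]
  have := cs.count
  omega

end Paper
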